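/- Let k ≥ 2 and suppose (s,t;k+1,k) is admissible. Suppose real numbers t₁ ∈ [0,k−1], t₂ ∈ [0,2], s₁ ∈ [0,1], s₂ ∈ [0,s], u ∈ [s₁,1], v ∈ [0,1] satisfy the inequalities t₁+t₂ ≥ t, s₁+s₂ ≥ s, and u+v ≥ F(s₁,t₂;2,1). Then u + max{F(s₂, t₁+v; k, k−1), s₂+v} ≥ F(s,t;k+1,k). -/

import Mathlib

/-- The Furstenberg index `F(s,t;n,k)` of the paper, defined via the canonical
decompositions `s = d + σ` (`d ∈ ℕ`, `σ ∈ (0,1]`) and, when applicable,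
`t = (k-d-1)(n-k) + (d+2)m + τ` (`m ∈ {0,…,n-k-1}`, `τ ∈ (0,d+2]`):
(a) `F(0,t;n,k) = max 0 (t - k(n-k))`;
(b) if `s > 0` and `t ≤ (k-d-1)(n-k)`, then `F = s`;
(c) if `τ ∈ (0,2]`, then `F = s + m + min τ (min ((σ+τ)/2) 1)`;
(d) if `τ ∈ (2,d+2]`, then `F = s + m + 1`. -/
noncomputable def fIndex (n k : ℕ) (s t : ℝ) : ℝ :=
  if s ≤ 0 then max 0 (t - k * (n - k : ℝ))
  else
    let d : ℤ := ⌈s⌉ - 1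
    let σ : ℝ := s - d
    if t ≤ ((k : ℝ) - d - 1) * ((n : ℝ) - k) then s
    else
      let r : ℝ := t - ((k : ℝ) - d - 1) * ((n : ℝ) - k)
      let m : ℤ := ⌈r / ((d : ℝ) + 2)⌉ - 1
      let τ : ℝ := r - ((d : ℝ) + 2) * m
      if τ ≤ 2 then s + m + min τ (min ((σ + τ) / 2) 1)
      else s + m + 1

/-- Closed form of `fIndex (K+1) K` on the admissible range. -/
lemma fIndex_eval (K : ℕ) (s t : ℝ) (hs : 0 ≤ s) (ht : t ≤ (K : ℝ) + 1) :
    fIndex (K + 1) K s t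
      = s + max 0 (min (t - K + (⌈s⌉ : ℝ)) (min ((s + t - K + 1) / 2) 1)) := by
  have hnk : ((K + 1 : ℕ) : ℝ) - (K : ℝ) = 1 := by push_cast; ring
  rw [fIndex]
  rcases le_or_gt s 0 with h0 | h0
  · rw [if_pos h0]
    have hs0 : s = 0 := le_antisymm h0 hs
    subst hs0
    rw [hnk, mul_one]
    norm_num
    rcases le_total (t - (K:ℝ)) 0 with h | h
    · rw [max_eq_left (by linarith), max_eq_left]
      exact le_trans (min_le_left _ _) (by linarith)
    · rw [min_eq_left (le_min (by linarith) (by linarith)),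
        max_eq_right h]
  · rw [if_neg (by linarith)]
    simp only [hnk, mul_one]
    have hc1 : (1 : ℤ) ≤ ⌈s⌉ := Int.ceil_pos.mpr h0
    have hcs : s ≤ (⌈s⌉ : ℝ) := Int.le_ceil s
    have hcs' : (⌈s⌉ : ℝ) < s + 1 := Int.ceil_lt_add_one s
    have hc1' : (1 : ℝ) ≤ (⌈s⌉ : ℝ) := by exact_mod_cast hc1
    have hd : ((⌈s⌉ - 1 : ℤ) : ℝ) = (⌈s⌉ : ℝ) - 1 := by push_cast; ring
    rw [hd]
    rcases le_or_gt t ((K : ℝ) - ((⌈s⌉:ℝ) - 1) - 1) with h1 | h1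
    · rw [if_pos h1]
      rw [max_eq_left (le_trans (min_le_left _ _) (by linarith))]
      ring
    · rw [if_neg (not_le.mpr h1)]
      set r : ℝ := t - ((K:ℝ) - ((⌈s⌉:ℝ) - 1) - 1) with hr
      have hr0 : 0 < r := by rw [hr]; linarith
      have hrt : r = t - (K:ℝ) + (⌈s⌉:ℝ) := by rw [hr]; ring
      have hr1 : r ≤ (⌈s⌉ : ℝ) + 1 := by rw [hrt]; linarith
      have hcpos : (0 : ℝ) < (⌈s⌉ : ℝ) - 1 + 2 := by linarith
      have hm : ⌈r / ((⌈s⌉:ℝ) - 1 + 2)⌉ = 1 := by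
        rw [Int.ceil_eq_iff]
        refine ⟨by push_cast; norm_num; positivity, ?_⟩
        · push_cast
          rw [div_le_one hcpos]; linarith
      rw [hm]
      norm_num
      have hb : (s - ((⌈s⌉:ℝ) - 1) + r) / 2 = (s + t - ↑K + 1) / 2 := by
        rw [hrt]; ring
      rw [hb, ← hrt]
      rcases le_or_gt r 2 with h2 | h2
      · rw [if_pos h2, max_eq_right]
        exact le_min (le_of_lt hr0) (le_min (by linarith) (by norm_num))
      · rw [if_neg (not_le.mpr h2),
          min_eq_right (show (1:ℝ) ≤ (s + t - ↑K + 1)/2 by rw [← hb]; linarith),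
          min_eq_right (by linarith), max_eq_right (by norm_num)]

/-- Exhaustive case description of `max 0 (min X (min Y 1))`. -/
lemma phi_cases (X Y : ℝ) :
    (max 0 (min X (min Y 1)) = 0 ∧ (X ≤ 0 ∨ Y ≤ 0)) ∨
    (max 0 (min X (min Y 1)) = X ∧ 0 ≤ X ∧ X ≤ Y ∧ X ≤ 1) ∨
    (max 0 (min X (min Y 1)) = Y ∧ 0 ≤ Y ∧ Y ≤ X ∧ Y ≤ 1) ∨
    (max 0 (min X (min Y 1)) = 1 ∧ 1 ≤ X ∧ 1 ≤ Y) := by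
  rcases le_total X 0 with hx | hx
  · exact Or.inl ⟨max_eq_left (le_trans (min_le_left _ _) hx), Or.inl hx⟩
  rcases le_total Y 0 with hy | hy
  · exact Or.inl ⟨max_eq_left (le_trans (le_trans (min_le_right _ _)
      (min_le_left _ _)) hy), Or.inr hy⟩
  rcases le_total X Y with hxy | hxy
  · rcases le_total X 1 with hx1 | hx1
    · exact Or.inr (Or.inl ⟨by rw [min_eq_left (le_min hxy hx1), max_eq_right hx],
        hx, hxy, hx1⟩)
    · refine Or.inr (Or.inr (Or.inr ⟨?_, hx1, le_trans hx1 hxy⟩))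
      rw [min_eq_right (le_trans hx1 hxy), min_eq_right hx1,
        max_eq_right (by norm_num)]
  · rcases le_total Y 1 with hy1 | hy1
    · exact Or.inr (Or.inr (Or.inl ⟨by
        rw [min_eq_left hy1, min_eq_right hxy, max_eq_right hy], hy, hxy, hy1⟩))
    · refine Or.inr (Or.inr (Or.inr ⟨?_, le_trans hy1 hxy, hy1⟩))
      rw [min_eq_right hy1, min_eq_right (le_trans hy1 hxy),
        max_eq_right (by norm_num)]


set_option maxHeartbeats 4000000 in
/-- The purely linear core of Statement 12, after replacing the three
`fIndex` occurrences by their closed forms and the relevant ceilings by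
real variables `C = ⌈s⌉`, `C1 = ⌈s₁⌉`, `C2 = ⌈s₂⌉`. -/
lemma stmt12_core (K s t t₁ t₂ s₁ s₂ u v C C1 C2 M : ℝ)
    (hs0 : 0 ≤ s) (hsk : s ≤ K) (ht0 : 0 ≤ t) (ht : t ≤ K + 1)
    (ht1 : 0 ≤ t₁) (ht1' : t₁ ≤ K - 1) (ht2 : 0 ≤ t₂) (ht2' : t₂ ≤ 2)
    (hs1 : 0 ≤ s₁) (hs1' : s₁ ≤ 1) (hs2 : 0 ≤ s₂) (hs2' : s₂ ≤ s)
    (hu : s₁ ≤ u) (hu' : u ≤ 1) (hv : 0 ≤ v) (hv' : v ≤ 1)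
    (hT : t ≤ t₁ + t₂) (hS : s ≤ s₁ + s₂)
    (hCs : s ≤ C) (hCs' : C < s + 1) (hCs0 : 0 ≤ C) (hCsk : C ≤ K)
    (hC2 : s₂ ≤ C2) (hC2' : C2 < s₂ + 1) (hC20 : 0 ≤ C2)
    (hC1 : s₁ ≤ C1) (hC1' : C1 < s₁ + 1)
    (hd1 : C1 = 0 ∨ C1 = 1) (hd2 : C2 = C - 1 ∨ C2 = C)
    (hUV : s₁ + max 0 (min (t₂ - 1 + C1) (min ((s₁ + t₂ - 1 + 1) / 2) 1)) ≤ u + v)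
    (hRa : s₂ + max 0 (min (t₁ + v - (K - 1) + C2)
        (min ((s₂ + (t₁ + v) - (K - 1) + 1) / 2) 1)) ≤ M)
    (hRb : s₂ + v ≤ M) :
    s + max 0 (min (t - K + C) (min ((s + t - K + 1) / 2) 1)) ≤ u + M := by
  rcases hd1 with hd1 | hd1 <;> rcases hd2 with hd2 | hd2 <;>
  rcases phi_cases (t - K + C) ((s + t - K + 1) / 2) with
    ⟨eg, heg | heg⟩ | ⟨eg, hg1, hg2, hg3⟩ | ⟨eg, hg1, hg2, hg3⟩ | ⟨eg, hg1, hg2⟩ <;>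
  rw [eg] <;>
  rcases phi_cases (t₁ + v - (K - 1) + C2) ((s₂ + (t₁ + v) - (K - 1) + 1) / 2) with
    ⟨ef, hef | hef⟩ | ⟨ef, hf1, hf2, hf3⟩ | ⟨ef, hf1, hf2, hf3⟩ | ⟨ef, hf1, hf2⟩ <;>
  rw [ef] at hRa <;>
  rcases phi_cases (t₂ - 1 + C1) ((s₁ + t₂ - 1 + 1) / 2) with
    ⟨eh, heh | heh⟩ | ⟨eh, hh1, hh2, hh3⟩ | ⟨eh, hh1, hh2, hh3⟩ | ⟨eh, hh1, hh2⟩ <;>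
  rw [eh] at hUV <;>
  linarith

/-- Let `k ≥ 2` and `(s,t;k+1,k)` admissible. If
`t₁ ∈ [0,k-1]`, `t₂ ∈ [0,2]`, `s₁ ∈ [0,1]`, `s₂ ∈ [0,s]`, `u ∈ [s₁,1]`,
`v ∈ [0,1]` satisfy `t₁+t₂ ≥ t`, `s₁+s₂ ≥ s` and `u+v ≥ F(s₁,t₂;2,1)`, then
`u + max (F(s₂,t₁+v;k,k-1)) (s₂+v) ≥ F(s,t;k+1,k)`. -/
theorem stmt_12 (k : ℕ) (hk : 2 ≤ k) (s t t₁ t₂ s₁ s₂ u v : ℝ)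
    (hs0 : 0 ≤ s) (hsk : s ≤ k) (ht0 : 0 ≤ t) (ht : t ≤ (k : ℝ) + 1)
    (ht1 : 0 ≤ t₁) (ht1' : t₁ ≤ (k : ℝ) - 1) (ht2 : 0 ≤ t₂) (ht2' : t₂ ≤ 2)
    (hs1 : 0 ≤ s₁) (hs1' : s₁ ≤ 1) (hs2 : 0 ≤ s₂) (hs2' : s₂ ≤ s)
    (hu : s₁ ≤ u) (hu' : u ≤ 1) (hv : 0 ≤ v) (hv' : v ≤ 1)
    (hT : t ≤ t₁ + t₂) (hS : s ≤ s₁ + s₂) (hUV : fIndex 2 1 s₁ t₂ ≤ u + v) :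
    fIndex (k + 1) k s t ≤ u + max (fIndex k (k - 1) s₂ (t₁ + v)) (s₂ + v) := by
  have hk1 : k - 1 + 1 = k := by omega
  have hcast : ((k - 1 : ℕ) : ℝ) = (k : ℝ) - 1 := by
    have h1 : (1:ℕ) ≤ k := by omega
    push_cast [h1]; ring
  -- closed forms
  have e1 : fIndex (k + 1) k s t
      = s + max 0 (min (t - (k:ℝ) + (⌈s⌉ : ℝ)) (min ((s + t - (k:ℝ) + 1) / 2) 1)) :=
    fIndex_eval k s t hs0 ht
  have e2 : fIndex k (k - 1) s₂ (t₁ + v)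
      = s₂ + max 0 (min (t₁ + v - ((k:ℝ) - 1) + (⌈s₂⌉ : ℝ))
          (min ((s₂ + (t₁ + v) - ((k:ℝ) - 1) + 1) / 2) 1)) := by
    have := fIndex_eval (k - 1) s₂ (t₁ + v) hs2 (by rw [hcast]; linarith)
    rw [hk1, hcast] at this
    exact this
  have e3 : fIndex 2 1 s₁ t₂
      = s₁ + max 0 (min (t₂ - 1 + (⌈s₁⌉ : ℝ)) (min ((s₁ + t₂ - 1 + 1) / 2) 1)) := by
    have := fIndex_eval 1 s₁ t₂ hs1 (by norm_num; linarith)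
    rw [show ((1:ℕ):ℝ) = 1 by norm_num] at this
    exact this
  -- ceiling facts
  have hCs : s ≤ (⌈s⌉ : ℝ) := Int.le_ceil s
  have hCs' : (⌈s⌉ : ℝ) < s + 1 := Int.ceil_lt_add_one s
  have hCs0 : (0 : ℝ) ≤ (⌈s⌉ : ℝ) := by exact_mod_cast Int.ceil_nonneg hs0
  have hCsk : (⌈s⌉ : ℝ) ≤ (k : ℝ) := by
    have : ⌈s⌉ ≤ (k : ℤ) := Int.ceil_le.mpr (by exact_mod_cast hsk)
    exact_mod_cast this
  have hC2 : s₂ ≤ (⌈s₂⌉ : ℝ) := Int.le_ceil s₂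
  have hC2' : (⌈s₂⌉ : ℝ) < s₂ + 1 := Int.ceil_lt_add_one s₂
  have hC20 : (0 : ℝ) ≤ (⌈s₂⌉ : ℝ) := by exact_mod_cast Int.ceil_nonneg hs2
  have hC1 : s₁ ≤ (⌈s₁⌉ : ℝ) := Int.le_ceil s₁
  have hC1' : (⌈s₁⌉ : ℝ) < s₁ + 1 := Int.ceil_lt_add_one s₁
  have hd1 : (⌈s₁⌉ : ℝ) = 0 ∨ (⌈s₁⌉ : ℝ) = 1 := by
    have h1 : (0 : ℤ) ≤ ⌈s₁⌉ := Int.ceil_nonneg hs1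
    have h2 : ⌈s₁⌉ ≤ (1 : ℤ) := Int.ceil_le.mpr (by exact_mod_cast hs1')
    have : ⌈s₁⌉ = 0 ∨ ⌈s₁⌉ = 1 := by omega
    rcases this with h | h <;> [left; right] <;> rw [h] <;> norm_num
  have hd2 : (⌈s₂⌉ : ℝ) = (⌈s⌉ : ℝ) - 1 ∨ (⌈s₂⌉ : ℝ) = (⌈s⌉ : ℝ) := by
    have h1 : ⌈s₂⌉ ≤ ⌈s⌉ := Int.ceil_le_ceil hs2'
    have h2 : ⌈s⌉ - 1 ≤ ⌈s₂⌉ := by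
      have hle : s - 1 ≤ s₂ := by linarith
      have := Int.ceil_le_ceil (R := ℝ) hle
      rwa [show s - 1 = s - ((1:ℤ):ℝ) by norm_num, Int.ceil_sub_intCast s 1] at this
    have : ⌈s₂⌉ = ⌈s⌉ - 1 ∨ ⌈s₂⌉ = ⌈s⌉ := by omega
    rcases this with h | h <;> [left; right] <;> rw [h] <;> push_cast <;> ring
  -- resource bounds
  have hRa : s₂ + max 0 (min (t₁ + v - ((k:ℝ) - 1) + (⌈s₂⌉ : ℝ))
        (min ((s₂ + (t₁ + v) - ((k:ℝ) - 1) + 1) / 2) 1))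
      ≤ max (fIndex k (k - 1) s₂ (t₁ + v)) (s₂ + v) := by
    rw [← e2]; exact le_max_left _ _
  have hRb : s₂ + v ≤ max (fIndex k (k - 1) s₂ (t₁ + v)) (s₂ + v) := le_max_right _ _
  rw [e3] at hUV
  rw [e1]
  exact stmt12_core (k:ℝ) s t t₁ t₂ s₁ s₂ u v (⌈s⌉:ℝ) (⌈s₁⌉:ℝ) (⌈s₂⌉:ℝ) _
    hs0 hsk ht0 ht ht1 ht1' ht2 ht2' hs1 hs1' hs2 hs2' hu hu' hv hv' hT hS
    hCs hCs' hCs0 hCsk hC2 hC2' hC20 hC1 hC1' hd1 hd2 hUV hRa hRb
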